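/- Let a, b > 0 and N ∈ ℕ with N ≥ 1. Define ĩ = max((N−3)·b²/(a²+b²), 0) + 2, j̃ = max((N−3)·a²/(a²+b²), 0) + 2, i* = ⌊ĩ + 1/2⌋ and j* = ⌈j̃ − 1/2⌉. Then L(N) = √((i*−2)²·a² + (j*−2)²·b²), where L(N) is the infimum of lengths of segments visiting at least N tiles of the a×b grid. -/

import Mathlib

open Set

/-- Interior of the tile `T(k,l)` of the `a×b` grid. -/
noncomputable def tileInt (a b : ℝ) (k l : ℤ) : Set (ℝ × ℝ) :=
  Set.Ioo ((k : ℝ) * a) (((k : ℝ) + 1) * a) ×ˢ Set.Ioo ((l : ℝ) * b) (((l : ℝ) + 1) * b)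

/-- Number of tiles of the `a×b` grid visited by the closed segment with endpoints `p`, `q`. -/
noncomputable def visitCount (a b : ℝ) (p q : ℝ × ℝ) : ℕ :=
  Set.ncard {kl : ℤ × ℤ | (segment ℝ p q ∩ tileInt a b kl.1 kl.2).Nonempty}

/-- Normalized width of the discrete bounding rectangle of the segment with endpoints `p`, `q`. -/
noncomputable def normWidth (a : ℝ) (p q : ℝ × ℝ) : ℤ :=
  ⌈max p.1 q.1 / a⌉ - ⌊min p.1 q.1 / a⌋

/-- Normalized height of the discrete bounding rectangle of the segment with endpoints `p`, `q`. -/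
noncomputable def normHeight (b : ℝ) (p q : ℝ × ℝ) : ℤ :=
  ⌈max p.2 q.2 / b⌉ - ⌊min p.2 q.2 / b⌋

/-- Euclidean length of the segment with endpoints `p`, `q`. -/
noncomputable def segLen (p q : ℝ × ℝ) : ℝ :=
  Real.sqrt ((p.1 - q.1) ^ 2 + (p.2 - q.2) ^ 2)

/-- `maxTiles a b ℓ` : maximum number of tiles of the `a×b` grid visited by a segment of length `ℓ`. -/
noncomputable def maxTiles (a b ℓ : ℝ) : ℕ :=
  sSup {n : ℕ | ∃ p q : ℝ × ℝ, segLen p q = ℓ ∧ visitCount a b p q = n}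

/-- `infLen a b N` : infimum of lengths of segments visiting at least `N` tiles of the `a×b` grid. -/
noncomputable def infLen (a b : ℝ) (N : ℕ) : ℝ :=
  sInf {ℓ : ℝ | 0 < ℓ ∧ ∃ p q : ℝ × ℝ, segLen p q = ℓ ∧ N ≤ visitCount a b p q}

/-- `minIntLen N` : minimum positive integer length of a segment visiting at least `N` tiles
of the unit square grid. -/
noncomputable def minIntLen (N : ℕ) : ℕ :=
  sInf {L : ℕ | 1 ≤ L ∧ ∃ p q : ℝ × ℝ, segLen p q = (L : ℝ) ∧ N ≤ visitCount 1 1 p q}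

lemma mem_segment_iff (p q z : ℝ × ℝ) :
    z ∈ segment ℝ p q ↔ ∃ t : ℝ, 0 ≤ t ∧ t ≤ 1 ∧
      z.1 = p.1 + t * (q.1 - p.1) ∧ z.2 = p.2 + t * (q.2 - p.2) := by
  rw [segment_eq_image' ℝ p q]
  constructor
  · rintro ⟨t, ⟨ht0, ht1⟩, rfl⟩
    refine ⟨t, ht0, ht1, ?_, ?_⟩ <;> simp [Prod.fst_add, Prod.snd_add, smul_eq_mul] <;> ring
  · rintro ⟨t, ht0, ht1, h1, h2⟩
    refine ⟨t, ⟨ht0, ht1⟩, ?_⟩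
    apply Prod.ext <;> simp [smul_eq_mul] <;> [rw [h1]; rw [h2]] <;> ring

lemma mem_tileInt_iff (a b : ℝ) (k l : ℤ) (z : ℝ × ℝ) :
    z ∈ tileInt a b k l ↔ ((k:ℝ)*a < z.1 ∧ z.1 < ((k:ℝ)+1)*a) ∧ ((l:ℝ)*b < z.2 ∧ z.2 < ((l:ℝ)+1)*b) := by
  simp [tileInt, Set.mem_prod, Set.mem_Ioo]

lemma visitCount_symm (a b : ℝ) (p q : ℝ × ℝ) : visitCount a b q p = visitCount a b p q := by
  unfold visitCount; rw [segment_symm]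

lemma segLen_symm (p q : ℝ × ℝ) : segLen q p = segLen p q := by
  unfold segLen; ring_nf

lemma visitCount_reflect (a b : ℝ) (p q : ℝ × ℝ) :
    visitCount a b (p.1, -p.2) (q.1, -q.2) = visitCount a b p q := by
  unfold visitCount
  have hset : {kl : ℤ × ℤ | (segment ℝ (p.1, -p.2) (q.1, -q.2) ∩ tileInt a b kl.1 kl.2).Nonempty}
      = (fun kl : ℤ × ℤ => (kl.1, -1 - kl.2)) '' {kl : ℤ × ℤ | (segment ℝ p q ∩ tileInt a b kl.1 kl.2).Nonempty} := by
    ext ⟨k, l⟩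
    simp only [Set.mem_setOf_eq, Set.mem_image, Prod.mk.injEq, Prod.exists]
    constructor
    · rintro ⟨z, hz, htile⟩
      refine ⟨k, -1 - l, ⟨(z.1, -z.2), ?_, ?_⟩, rfl, by ring⟩
      · rw [mem_segment_iff] at hz ⊢
        obtain ⟨t, ht0, ht1, h1, h2⟩ := hz
        exact ⟨t, ht0, ht1, by simpa using h1, by simp at h2 ⊢; linarith⟩
      · rw [mem_tileInt_iff] at htile ⊢
        obtain ⟨hx, hy⟩ := htile
        refine ⟨by simpa using hx, ?_⟩
        push_cast at hy ⊢
        constructor <;> [nlinarith [hy.2]; nlinarith [hy.1]]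
    · rintro ⟨k', l', ⟨z, hz, htile⟩, rfl, rfl⟩
      refine ⟨(z.1, -z.2), ?_, ?_⟩
      · rw [mem_segment_iff] at hz ⊢
        obtain ⟨t, ht0, ht1, h1, h2⟩ := hz
        exact ⟨t, ht0, ht1, by simpa using h1, by simp at h2 ⊢; linarith⟩
      · rw [mem_tileInt_iff] at htile ⊢
        obtain ⟨hx, hy⟩ := htile
        refine ⟨by simpa using hx, ?_⟩
        push_cast at hy ⊢
        constructor <;> [nlinarith [hy.2]; nlinarith [hy.1]]
  rw [hset, Set.ncard_image_of_injective _ (fun x y h => by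
    simp only [Prod.mk.injEq] at h; exact Prod.ext h.1 (by omega))]

lemma visited_bounds (a b : ℝ) (ha : 0 < a) (hb : 0 < b) (p q : ℝ × ℝ)
    (hx : p.1 ≤ q.1) (hy : p.2 ≤ q.2) (k l : ℤ)
    (h : (segment ℝ p q ∩ tileInt a b k l).Nonempty) :
    (⌊p.1/a⌋ ≤ k ∧ k ≤ ⌈q.1/a⌉ - 1) ∧ (⌊p.2/b⌋ ≤ l ∧ l ≤ ⌈q.2/b⌉ - 1) := by
  obtain ⟨z, hz, ht⟩ := h
  rw [mem_segment_iff] at hz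
  obtain ⟨t, ht0, ht1, h1, h2⟩ := hz
  rw [mem_tileInt_iff] at ht
  obtain ⟨⟨hx1, hx2⟩, ⟨hy1, hy2⟩⟩ := ht
  have hz1lo : p.1 ≤ z.1 := by nlinarith
  have hz1hi : z.1 ≤ q.1 := by nlinarith
  have hz2lo : p.2 ≤ z.2 := by nlinarith
  have hz2hi : z.2 ≤ q.2 := by nlinarith
  constructor
  · constructor
    · have h3 : (⌊p.1/a⌋ : ℝ) < (k:ℝ) + 1 := by
        calc (⌊p.1/a⌋ : ℝ) ≤ p.1/a := Int.floor_le _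
        _ ≤ z.1/a := by gcongr
        _ < (k:ℝ)+1 := by rw [div_lt_iff₀ ha]; linarith
      have h4 : ⌊p.1/a⌋ < k + 1 := by exact_mod_cast h3
      omega
    · have h3 : (k:ℝ) < (⌈q.1/a⌉ : ℝ) := by
        calc (k:ℝ) < z.1/a := by rw [lt_div_iff₀ ha]; linarith
        _ ≤ q.1/a := by gcongr
        _ ≤ (⌈q.1/a⌉:ℝ) := Int.le_ceil _
      have h4 : k < ⌈q.1/a⌉ := by exact_mod_cast h3
      omega
  · constructor
    · have h3 : (⌊p.2/b⌋ : ℝ) < (l:ℝ) + 1 := by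
        calc (⌊p.2/b⌋ : ℝ) ≤ p.2/b := Int.floor_le _
        _ ≤ z.2/b := by gcongr
        _ < (l:ℝ)+1 := by rw [div_lt_iff₀ hb]; linarith
      have h4 : ⌊p.2/b⌋ < l + 1 := by exact_mod_cast h3
      omega
    · have h3 : (l:ℝ) < (⌈q.2/b⌉ : ℝ) := by
        calc (l:ℝ) < z.2/b := by rw [lt_div_iff₀ hb]; linarith
        _ ≤ q.2/b := by gcongr
        _ ≤ (⌈q.2/b⌉:ℝ) := Int.le_ceil _
      have h4 : l < ⌈q.2/b⌉ := by exact_mod_cast h3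
      omega

lemma count_le_core (a b : ℝ) (ha : 0 < a) (hb : 0 < b) (p q : ℝ × ℝ)
    (hx : p.1 ≤ q.1) (hy : p.2 ≤ q.2) :
    visitCount a b p q ≤ ((⌈q.1/a⌉ - ⌊p.1/a⌋) + (⌈q.2/b⌉ - ⌊p.2/b⌋) - 1).toNat := by
  set V := {kl : ℤ × ℤ | (segment ℝ p q ∩ tileInt a b kl.1 kl.2).Nonempty} with hV
  have hinj : Set.InjOn (fun kl : ℤ × ℤ => kl.1 + kl.2) V := by
    rintro ⟨k, l⟩ hkl ⟨k', l'⟩ hkl' hsum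
    simp only [hV, Set.mem_setOf_eq] at hkl hkl'
    obtain ⟨z, hz, htz⟩ := hkl
    obtain ⟨z', hz', htz'⟩ := hkl'
    rw [mem_segment_iff] at hz hz'
    obtain ⟨t, ht0, ht1, h1, h2⟩ := hz
    obtain ⟨t', ht0', ht1', h1', h2'⟩ := hz'
    rw [mem_tileInt_iff] at htz htz'
    simp only at hsum htz htz'
    obtain ⟨⟨hx1, hx2⟩, hy1, hy2⟩ := htz
    obtain ⟨⟨hx1', hx2'⟩, hy1', hy2'⟩ := htz'
    have key : ∀ s s' : ℝ, s ≤ s' →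
        ∀ m m' n n' : ℤ, (m:ℝ)*a < p.1 + s*(q.1-p.1) → p.1 + s'*(q.1-p.1) < ((m':ℝ)+1)*a →
        (n:ℝ)*b < p.2 + s*(q.2-p.2) → p.2 + s'*(q.2-p.2) < ((n':ℝ)+1)*b →
        m ≤ m' ∧ n ≤ n' := by
      intro s s' hss m m' n n' hm hm' hn hn'
      have hmono1 : s*(q.1-p.1) ≤ s'*(q.1-p.1) :=
        mul_le_mul_of_nonneg_right hss (sub_nonneg.mpr hx)
      have hmono2 : s*(q.2-p.2) ≤ s'*(q.2-p.2) :=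
        mul_le_mul_of_nonneg_right hss (sub_nonneg.mpr hy)
      constructor
      · have h5 : (m:ℝ)*a < ((m':ℝ)+1)*a := by linarith
        have h6 : (m:ℝ) < (m':ℝ)+1 := (mul_lt_mul_iff_left₀ ha).mp h5
        exact_mod_cast Int.lt_add_one_iff.mp (by exact_mod_cast h6)
      · have h5 : (n:ℝ)*b < ((n':ℝ)+1)*b := by linarith
        have h6 : (n:ℝ) < (n':ℝ)+1 := (mul_lt_mul_iff_left₀ hb).mp h5
        exact_mod_cast Int.lt_add_one_iff.mp (by exact_mod_cast h6)
    rcases le_total t t' with hle | hle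
    · have := key t t' hle k k' l l' (by rw [← h1]; exact hx1) (by rw [← h1']; exact hx2')
        (by rw [← h2]; exact hy1) (by rw [← h2']; exact hy2')
      have h := this
      refine Prod.ext ?_ ?_ <;> simp <;> omega
    · have := key t' t hle k' k l' l (by rw [← h1']; exact hx1') (by rw [← h1]; exact hx2)
        (by rw [← h2']; exact hy1') (by rw [← h2]; exact hy2)
      refine Prod.ext ?_ ?_ <;> simp <;> omega
  have himg : (fun kl : ℤ × ℤ => kl.1 + kl.2) '' V ⊆
      Set.Icc (⌊p.1/a⌋ + ⌊p.2/b⌋) ((⌈q.1/a⌉ - 1) + (⌈q.2/b⌉ - 1)) := by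
    rintro x ⟨⟨k, l⟩, hkl, rfl⟩
    have := visited_bounds a b ha hb p q hx hy k l hkl
    simp only [Set.mem_Icc]
    omega
  calc visitCount a b p q = V.ncard := rfl
    _ = ((fun kl : ℤ × ℤ => kl.1 + kl.2) '' V).ncard := (Set.ncard_image_of_injOn hinj).symm
    _ ≤ (Set.Icc (⌊p.1/a⌋ + ⌊p.2/b⌋) ((⌈q.1/a⌉ - 1) + (⌈q.2/b⌉ - 1))).ncard :=
        Set.ncard_le_ncard himg (by rw [← Finset.coe_Icc]; exact (Finset.Icc _ _).finite_toSet)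
    _ = _ := by rw [← Finset.coe_Icc, Set.ncard_coe_finset, Int.card_Icc]; congr 1; ring

lemma nearest_sq (x : ℝ) (k : ℤ) : ((⌊x + 1/2⌋ : ℝ) - x)^2 ≤ ((k:ℝ) - x)^2 := by
  set i := ⌊x + 1/2⌋ with hi
  have h1 : (i:ℝ) ≤ x + 1/2 := Int.floor_le _
  have h2 : x + 1/2 - 1 < i := Int.sub_one_lt_floor _
  rcases lt_trichotomy k i with h | h | h
  · have hk : (k:ℝ) ≤ (i:ℝ) - 1 := by exact_mod_cast Int.le_sub_one_of_lt h
    nlinarith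
  · rw [h]
  · have hk : (i:ℝ) + 1 ≤ (k:ℝ) := by exact_mod_cast h
    nlinarith

lemma star_facts (a b : ℝ) (ha : 0 < a) (hb : 0 < b) (N : ℕ) (hN : 1 ≤ N)
    (itil jtil : ℝ)
    (hitil : itil = max (((N : ℝ) - 3) * b ^ 2 / (a ^ 2 + b ^ 2)) 0 + 2)
    (hjtil : jtil = max (((N : ℝ) - 3) * a ^ 2 / (a ^ 2 + b ^ 2)) 0 + 2)
    (istar jstar : ℤ)
    (histar : istar = ⌊itil + 1 / 2⌋) (hjstar : jstar = ⌈jtil - 1 / 2⌉) :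
    2 ≤ istar ∧ 2 ≤ jstar ∧ (N:ℤ) + 1 ≤ istar + jstar ∧
    (∀ m n : ℤ, 2 ≤ m → 2 ≤ n → (N:ℤ) + 1 ≤ m + n →
      ((istar:ℝ)-2)^2*a^2 + ((jstar:ℝ)-2)^2*b^2 ≤ ((m:ℝ)-2)^2*a^2 + ((n:ℝ)-2)^2*b^2) := by
  have hab : (0:ℝ) < a^2 + b^2 := by positivity
  rcases le_or_gt (N:ℤ) 3 with hN3 | hN3
  · -- degenerate case: N ≤ 3
    have hNr : (N:ℝ) ≤ 3 := by exact_mod_cast hN3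
    have hmb : max (((N : ℝ) - 3) * b ^ 2 / (a ^ 2 + b ^ 2)) 0 = 0 := by
      apply max_eq_right
      apply div_nonpos_of_nonpos_of_nonneg _ hab.le
      nlinarith [sq_nonneg b]
    have hma : max (((N : ℝ) - 3) * a ^ 2 / (a ^ 2 + b ^ 2)) 0 = 0 := by
      apply max_eq_right
      apply div_nonpos_of_nonpos_of_nonneg _ hab.le
      nlinarith [sq_nonneg a]
    have hi2 : istar = 2 := by rw [histar, hitil, hmb]; norm_num
    have hj2 : jstar = 2 := by
      rw [hjstar, hjtil, hma]
      rw [show (0:ℝ) + 2 - 1/2 = 3/2 by ring]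
      rw [Int.ceil_eq_iff]
      norm_num
    refine ⟨by omega, by omega, by omega, ?_⟩
    intro m n hm hn hmn
    rw [hi2, hj2]
    have hm' : (0:ℝ) ≤ (m:ℝ) - 2 := by
      have : (2:ℝ) ≤ (m:ℝ) := by exact_mod_cast hm
      linarith
    have hn' : (0:ℝ) ≤ (n:ℝ) - 2 := by
      have : (2:ℝ) ≤ (n:ℝ) := by exact_mod_cast hn
      linarith
    norm_num
    positivity
  · -- main case: N ≥ 4
    have hN4 : (4:ℤ) ≤ (N:ℤ) := by omega
    have hNr : (4:ℝ) ≤ (N:ℝ) := by exact_mod_cast hN4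
    set c : ℝ := ((N : ℝ) - 3) * b ^ 2 / (a ^ 2 + b ^ 2) with hc
    have hc0 : 0 ≤ c := by
      apply div_nonneg _ hab.le
      nlinarith [sq_nonneg b]
    have hrel : c * (a^2 + b^2) = ((N:ℝ) - 3) * b^2 := by
      rw [hc, div_mul_cancel₀ _ hab.ne']
    have hcN : c ≤ (N:ℝ) - 3 := by
      rw [div_le_iff₀ hab] at *
      nlinarith [sq_nonneg a]
    have hmb : max (((N : ℝ) - 3) * b ^ 2 / (a ^ 2 + b ^ 2)) 0 = c := max_eq_left hc0
    have hma : max (((N : ℝ) - 3) * a ^ 2 / (a ^ 2 + b ^ 2)) 0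
        = ((N : ℝ) - 3) * a ^ 2 / (a ^ 2 + b ^ 2) := by
      apply max_eq_left
      apply div_nonneg _ hab.le
      nlinarith [sq_nonneg a]
    have hjc : jtil = (N:ℝ) - 1 - c := by
      rw [hjtil, hma, hc]
      field_simp
      ring
    have hic : itil = c + 2 := by rw [hitil, hmb]
    -- istar = floor (c + 2 + 1/2)
    have histar' : istar = ⌊(c + 2) + 1/2⌋ := by rw [histar, hic]
    -- jstar = N + 1 - istar
    have hjeq : jstar = (N:ℤ) + 1 - istar := by
      rw [hjstar, histar']
      have h1 : jtil - 1/2 = ((N:ℤ):ℝ) + 1 - ((c + 2) + 1/2) := by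
        rw [hjc]; push_cast; ring
      rw [h1]
      rw [show (⌈((N:ℤ):ℝ) + 1 - (c + 2 + 1/2)⌉ : ℤ) = -⌊-(((N:ℤ):ℝ) + 1 - (c + 2 + 1/2))⌋ from rfl]
      have h2 : -(((N:ℤ):ℝ) + 1 - (c + 2 + 1/2)) = (c + 2 + 1/2) - (((N:ℤ)+1 : ℤ) : ℝ) := by
        push_cast; ring
      rw [h2, Int.floor_sub_intCast]
      omega
    have hilo : 2 ≤ istar := by
      rw [histar']
      rw [Int.le_floor]
      push_cast
      linarith
    have hihi : istar ≤ (N:ℤ) - 1 := by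
      have h1 : (istar:ℝ) ≤ (c + 2) + 1/2 := by rw [histar']; exact Int.floor_le _
      have h2 : (istar:ℝ) < (N:ℝ) := by linarith
      have : istar < (N:ℤ) := by exact_mod_cast h2
      omega
    refine ⟨hilo, by omega, by omega, ?_⟩
    intro m n hm hn hmn
    -- quadratic identity
    have key : ∀ x : ℝ, (x-2)^2*a^2 + ((N:ℝ)-1-x)^2*b^2
        = (a^2+b^2)*(x - (c+2))^2 + c^2*a^2 + ((N:ℝ)-3-c)^2*b^2 := by
      intro x
      linear_combination (2*x - 2*c - 4) * hrel
    have hne : ∀ k : ℤ, ((istar:ℝ) - (c+2))^2 ≤ ((k:ℝ) - (c+2))^2 := by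
      intro k
      rw [histar']
      exact nearest_sq (c+2) k
    have hjr : (jstar:ℝ) - 2 = (N:ℝ) - 1 - (istar:ℝ) := by
      have : (jstar:ℝ) = ((N:ℤ):ℝ) + 1 - (istar:ℝ) := by exact_mod_cast congrArg (Int.cast : ℤ → ℝ) hjeq
      push_cast at this ⊢
      linarith
    rw [hjr]
    have e2 := key (istar:ℝ)
    rcases le_or_gt m ((N:ℤ)-1) with hmN | hmN
    · have hmr : (m:ℝ) ≤ (N:ℝ) - 1 := by
        have : (m:ℝ) ≤ ((N:ℤ)-1 : ℤ) := by exact_mod_cast hmN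
        push_cast at this; linarith
      have hnr : (N:ℝ) - 1 - (m:ℝ) ≤ (n:ℝ) - 2 := by
        have : ((N:ℤ)+1 : ℤ) ≤ m + n := hmn
        have h' : ((N:ℝ)+1) ≤ (m:ℝ) + (n:ℝ) := by exact_mod_cast this
        linarith
      have h1 : ((N:ℝ)-1-(m:ℝ))^2 ≤ ((n:ℝ)-2)^2 := by
        apply sq_le_sq'
        · linarith
        · exact hnr
      have e1 := key (m:ℝ)
      have h2 : (a^2+b^2)*((istar:ℝ) - (c+2))^2 ≤ (a^2+b^2)*((m:ℝ) - (c+2))^2 :=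
        mul_le_mul_of_nonneg_left (hne m) hab.le
      have h1b := mul_le_mul_of_nonneg_right h1 (sq_nonneg b)
      linarith [e1, e2, h2, h1b]
    · -- m ≥ N
      have hmr : (N:ℝ) ≤ (m:ℝ) := by
        have h9 : (N:ℤ) ≤ m := by omega
        exact_mod_cast h9
      have e3 := key ((((N:ℤ)-1 : ℤ)):ℝ)
      have hne3 := hne ((N:ℤ)-1)
      have h2 : (a^2+b^2)*((istar:ℝ) - (c+2))^2 ≤ (a^2+b^2)*(((((N:ℤ)-1:ℤ)) : ℝ) - (c+2))^2 :=
        mul_le_mul_of_nonneg_left hne3 hab.le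
      push_cast at e3 h2
      have e3' : ((N:ℝ)-3)^2*a^2 = (a^2+b^2)*(((N:ℝ)-1) - (c+2))^2 + c^2*a^2 + ((N:ℝ)-3-c)^2*b^2 := by
        linear_combination e3
      have hm3 : ((N:ℝ) - 3)^2 ≤ ((m:ℝ)-2)^2 := by
        apply sq_le_sq'
        · linarith
        · linarith
      have hm3a := mul_le_mul_of_nonneg_right hm3 (sq_nonneg a)
      have hnb := mul_nonneg (sq_nonneg ((n:ℝ)-2)) (sq_nonneg b)
      linarith [e2, e3', h2, hm3a, hnb]

lemma exists_sep (C : Finset ℝ) (hC : ∀ c ∈ C, c ∈ Set.Ioo (0:ℝ) 1) :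
    ∀ s : ℕ, s ≤ C.card → ∃ t : ℝ, t ∈ Set.Ioo (0:ℝ) 1 ∧ t ∉ C ∧
      (C.filter (· < t)).card = s := by
  intro s
  induction s with
  | zero =>
    intro _
    rcases C.eq_empty_or_nonempty with h | h
    · exact ⟨1/2, by norm_num, by simp [h], by simp [h]⟩
    · refine ⟨C.min' h / 2, ?_, ?_, ?_⟩
      · have h1 := (hC _ (C.min'_mem h)).1
        have h2 := (hC _ (C.min'_mem h)).2
        constructor <;> [linarith; linarith]
      · intro hmem
        have := C.min'_le _ hmem
        have h1 := (hC _ (C.min'_mem h)).1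
        linarith
      · rw [Finset.card_eq_zero, Finset.filter_eq_empty_iff]
        intro c hc
        have := C.min'_le _ hc
        have h1 := (hC _ (C.min'_mem h)).1
        simp only [not_lt]
        linarith
  | succ s ih =>
    intro hs
    obtain ⟨t, htIoo, htC, hcard⟩ := ih (by omega)
    set D := C.filter (t < ·) with hD
    have hDcard : D.card = C.card - s := by
      have hDeq : D = C.filter (fun c => ¬ c < t) := by
        ext c
        simp only [hD, Finset.mem_filter, not_lt]
        constructor
        · rintro ⟨h1, h2⟩; exact ⟨h1, h2.le⟩
        · rintro ⟨h1, h2⟩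
          refine ⟨h1, lt_of_le_of_ne h2 (fun h' => htC (h' ▸ h1))⟩
      have hsplit : (C.filter (· < t)).card + D.card = C.card := by
        rw [hDeq, Finset.card_filter_add_card_filter_not]
      omega
    have hDne : D.Nonempty := by
      rw [← Finset.card_pos]
      omega
    set c0 := D.min' hDne with hc0
    have hc0D : c0 ∈ D := D.min'_mem hDne
    have hc0C : c0 ∈ C := (Finset.mem_filter.mp hc0D).1
    have htc0 : t < c0 := (Finset.mem_filter.mp hc0D).2
    have hc0Ioo := hC _ hc0C
    set E := C.filter (c0 < ·) with hE
    -- choose t'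
    have hex : ∃ t' : ℝ, c0 < t' ∧ t' < 1 ∧ ∀ c ∈ E, t' < c := by
      rcases E.eq_empty_or_nonempty with h | h
      · exact ⟨(c0+1)/2, by linarith [hc0Ioo.2], by linarith [hc0Ioo.2],
          by intro c hc; rw [h] at hc; exact absurd hc (Finset.notMem_empty c)⟩
      · refine ⟨(c0 + E.min' h)/2, ?_, ?_, ?_⟩
        · have := (Finset.mem_filter.mp (E.min'_mem h)).2
          linarith
        · have h1 := (hC _ (Finset.mem_filter.mp (E.min'_mem h)).1).2
          have := (Finset.mem_filter.mp (E.min'_mem h)).2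
          linarith
        · intro c hc
          have h1 := E.min'_le _ hc
          have := (Finset.mem_filter.mp (E.min'_mem h)).2
          linarith
    obtain ⟨t', ht'1, ht'2, ht'E⟩ := hex
    refine ⟨t', ⟨lt_trans hc0Ioo.1 ht'1, ht'2⟩, ?_, ?_⟩
    · intro hmem
      rcases lt_trichotomy t' c0 with h | h | h
      · linarith
      · exact absurd (h ▸ hc0Ioo) (by intro _; linarith)
      · have : t' ∈ E := Finset.mem_filter.mpr ⟨hmem, h⟩
        exact absurd (ht'E _ this) (lt_irrefl t')
    · have hfe : C.filter (· < t') = insert c0 (C.filter (· < t)) := by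
        ext c
        simp only [Finset.mem_filter, Finset.mem_insert]
        constructor
        · rintro ⟨hcC, hct'⟩
          rcases lt_trichotomy c c0 with h | h | h
          · -- c < c0 : show c < t
            right
            refine ⟨hcC, ?_⟩
            by_contra hcon
            push_neg at hcon
            have hcD : c ∈ D := Finset.mem_filter.mpr ⟨hcC, lt_of_le_of_ne hcon (fun h' => htC (h' ▸ hcC))⟩
            have := D.min'_le _ hcD
            linarith
          · left; exact h
          · exfalso
            have : c ∈ E := Finset.mem_filter.mpr ⟨hcC, h⟩
            linarith [ht'E _ this]
        · rintro (rfl | ⟨hcC, hct⟩)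
          · exact ⟨hc0C, ht'1⟩
          · exact ⟨hcC, by linarith⟩
      rw [hfe, Finset.card_insert_of_notMem, hcard]
      simp only [Finset.mem_filter, not_and, not_lt]
      intro _
      exact htc0.le

set_option maxHeartbeats 2000000 in
lemma exists_good_seg (a b : ℝ) (ha : 0 < a) (hb : 0 < b) (i j : ℤ)
    (hi : 2 ≤ i) (hj : 2 ≤ j) (ε : ℝ) (hε : 0 < ε) (hεa : ε < a) (hεb : ε < b) :
    ∃ p q : ℝ × ℝ,
      segLen p q = Real.sqrt ((((i:ℝ)-2)*a + ε)^2 + (((j:ℝ)-2)*b + ε)^2) ∧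
      (i + j - 1).toNat ≤ visitCount a b p q := by
  have hir : (2:ℝ) ≤ (i:ℝ) := by exact_mod_cast hi
  have hjr : (2:ℝ) ≤ (j:ℝ) := by exact_mod_cast hj
  set Δx : ℝ := ((i:ℝ)-2)*a + ε with hΔx
  set Δy : ℝ := ((j:ℝ)-2)*b + ε with hΔy
  have hΔx0 : 0 < Δx := by nlinarith
  have hΔy0 : 0 < Δy := by nlinarith
  set y0 : ℝ := b - ε/2 with hy0
  set sl : ℤ → ℝ := fun l => ((l:ℝ)*b - y0)/Δy with hsl
  -- choose x0 generically
  set B : Set ℝ := (fun kl : ℤ×ℤ => (kl.1:ℝ)*a - Δx * sl kl.2) ''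
      (Set.Icc 1 (i-1) ×ˢ Set.Icc 1 (j-1)) with hB
  have hBfin : B.Finite := Set.Finite.image _ ((Set.finite_Icc _ _).prod (Set.finite_Icc _ _))
  have hIooInf : (Set.Ioo (a-ε) a).Infinite := Set.Ioo_infinite (by linarith)
  obtain ⟨x0, hx0⟩ := (hIooInf.diff hBfin).nonempty
  obtain ⟨⟨hx0a, hx0b⟩, hx0B⟩ := hx0
  set p : ℝ × ℝ := (x0, y0) with hp
  set q : ℝ × ℝ := (x0 + Δx, y0 + Δy) with hq
  set tk : ℤ → ℝ := fun k => ((k:ℝ)*a - x0)/Δx with htk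
  -- crossing time finsets
  set CV : Finset ℝ := (Finset.Icc 1 (i-1)).image tk with hCV
  set CH : Finset ℝ := (Finset.Icc 1 (j-1)).image sl with hCH
  set C : Finset ℝ := CV ∪ CH with hC
  have htkinj : Function.Injective tk := by
    intro k k' h
    simp only [htk] at h
    have h' : (k:ℝ)*a - x0 = (k':ℝ)*a - x0 := by
      have h2 := congrArg (· * Δx) h
      simpa [div_mul_cancel₀, hΔx0.ne'] using h2
    have h3 : (k:ℝ) = (k':ℝ) := mul_right_cancel₀ ha.ne' (by linarith)
    exact_mod_cast h3
  have hslinj : Function.Injective sl := by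
    intro l l' h
    simp only [hsl] at h
    have h' : (l:ℝ)*b - y0 = (l':ℝ)*b - y0 := by
      have h2 := congrArg (· * Δy) h
      simpa [div_mul_cancel₀, hΔy0.ne'] using h2
    have h3 : (l:ℝ) = (l':ℝ) := mul_right_cancel₀ hb.ne' (by linarith)
    exact_mod_cast h3
  -- disjointness of CV and CH
  have hdisj : Disjoint CV CH := by
    rw [Finset.disjoint_left]
    rintro r hrV hrH
    simp only [hCV, hCH, Finset.mem_image] at hrV hrH
    obtain ⟨k, hk, hkr⟩ := hrV
    obtain ⟨l, hl, hlr⟩ := hrH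
    apply hx0B
    rw [hB]
    refine ⟨(k, l), ?_, ?_⟩
    · simp only [Set.mem_prod, Set.mem_Icc]
      rw [Finset.mem_Icc] at hk hl
      exact ⟨⟨hk.1, hk.2⟩, ⟨hl.1, hl.2⟩⟩
    · simp only
      have : tk k = sl l := by rw [hkr, hlr]
      simp only [htk] at this
      have h2 : (k:ℝ)*a - x0 = Δx * sl l := by
        rw [← this]
        field_simp
      linarith
  have hcardCV : CV.card = (i-1).toNat := by
    rw [hCV, Finset.card_image_of_injective _ htkinj, Int.card_Icc]
    omega
  have hcardCH : CH.card = (j-1).toNat := by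
    rw [hCH, Finset.card_image_of_injective _ hslinj, Int.card_Icc]
    omega
  have hcardC : C.card = (i-1).toNat + (j-1).toNat := by
    rw [hC, Finset.card_union_of_disjoint hdisj, hcardCV, hcardCH]
  -- all crossing times in (0,1)
  have hCVIoo : ∀ k : ℤ, 1 ≤ k → k ≤ i - 1 → tk k ∈ Set.Ioo (0:ℝ) 1 := by
    intro k h1 h2
    have h1r : (1:ℝ) ≤ (k:ℝ) := by exact_mod_cast h1
    have h2r : (k:ℝ) ≤ (i:ℝ) - 1 := by
      have : (k:ℝ) ≤ ((i-1 : ℤ):ℝ) := by exact_mod_cast h2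
      push_cast at this
      linarith
    constructor
    · apply div_pos _ hΔx0
      nlinarith
    · rw [div_lt_one hΔx0]
      nlinarith
  have hCHIoo : ∀ l : ℤ, 1 ≤ l → l ≤ j - 1 → sl l ∈ Set.Ioo (0:ℝ) 1 := by
    intro l h1 h2
    have h1r : (1:ℝ) ≤ (l:ℝ) := by exact_mod_cast h1
    have h2r : (l:ℝ) ≤ (j:ℝ) - 1 := by
      have : (l:ℝ) ≤ ((j-1 : ℤ):ℝ) := by exact_mod_cast h2
      push_cast at this
      linarith
    constructor
    · apply div_pos _ hΔy0
      simp only [hy0]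
      nlinarith
    · rw [div_lt_one hΔy0]
      simp only [hy0]
      nlinarith
  have hCIoo : ∀ c ∈ C, c ∈ Set.Ioo (0:ℝ) 1 := by
    intro c hc
    rw [hC, Finset.mem_union] at hc
    rcases hc with hc | hc
    · simp only [hCV, Finset.mem_image, Finset.mem_Icc] at hc
      obtain ⟨k, ⟨hk1, hk2⟩, rfl⟩ := hc
      exact hCVIoo k hk1 hk2
    · simp only [hCH, Finset.mem_image, Finset.mem_Icc] at hc
      obtain ⟨l, ⟨hl1, hl2⟩, rfl⟩ := hc
      exact hCHIoo l hl1 hl2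
  -- key pointwise analysis
  have hkey : ∀ t : ℝ, t ∈ Set.Ioo (0:ℝ) 1 → t ∉ C → ∃ K L : ℤ, 0 ≤ K ∧ 0 ≤ L ∧
      ((x0 + t*Δx, y0 + t*Δy) : ℝ×ℝ) ∈ segment ℝ p q ∧
      (x0 + t*Δx, y0 + t*Δy) ∈ tileInt a b K L ∧
      K.toNat + L.toNat = (C.filter (· < t)).card := by
    rintro t ⟨ht0, ht1⟩ htC
    set x : ℝ := x0 + t*Δx with hx
    set y : ℝ := y0 + t*Δy with hy
    have htΔx : 0 < t*Δx := mul_pos ht0 hΔx0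
    have htΔx1 : t*Δx < Δx := by nlinarith
    have htΔy : 0 < t*Δy := mul_pos ht0 hΔy0
    have htΔy1 : t*Δy < Δy := by nlinarith
    have hxlo : a - ε < x := by rw [hx]; linarith
    have hxhi : x < ((i:ℝ)-1)*a + ε := by
      have h1 : x < x0 + Δx := by rw [hx]; linarith
      rw [hΔx] at h1
      linarith
    have hxia : x < (i:ℝ)*a := by linarith
    have hylo : b - ε/2 < y := by
      have h9 : (0:ℝ) < t * Δy := htΔy
      rw [hy, hy0]
      exact lt_add_of_pos_right _ h9
    have hyhi : y < ((j:ℝ)-1)*b + ε/2 := by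
      have h1 : y < y0 + Δy := by rw [hy]; linarith
      rw [hΔy, hy0] at h1
      linarith
    have hyjb : y < (j:ℝ)*b := by linarith
    have hxnm : ∀ k : ℤ, (k:ℝ)*a ≠ x := by
      intro k hk
      have hk1 : 1 ≤ k := by
        by_contra hcon
        push_neg at hcon
        have hk0 : k ≤ 0 := by omega
        have : (k:ℝ) ≤ 0 := by exact_mod_cast hk0
        nlinarith
      have hk2 : k ≤ i - 1 := by
        have : (k:ℝ)*a < (i:ℝ)*a := by rw [hk]; exact hxia
        have h3 : (k:ℝ) < (i:ℝ) := (mul_lt_mul_iff_left₀ ha).mp this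
        have : k < i := by exact_mod_cast h3
        omega
      apply htC
      rw [hC, Finset.mem_union]
      left
      rw [hCV, Finset.mem_image]
      refine ⟨k, Finset.mem_Icc.mpr ⟨hk1, hk2⟩, ?_⟩
      simp only [htk]
      rw [hk]
      field_simp [hx]
      linarith
    have hynm : ∀ l : ℤ, (l:ℝ)*b ≠ y := by
      intro l hl
      have hl1 : 1 ≤ l := by
        by_contra hcon
        push_neg at hcon
        have hl0 : l ≤ 0 := by omega
        have : (l:ℝ) ≤ 0 := by exact_mod_cast hl0
        nlinarith
      have hl2 : l ≤ j - 1 := by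
        have : (l:ℝ)*b < (j:ℝ)*b := by rw [hl]; exact hyjb
        have h3 : (l:ℝ) < (j:ℝ) := (mul_lt_mul_iff_left₀ hb).mp this
        have : l < j := by exact_mod_cast h3
        omega
      apply htC
      rw [hC, Finset.mem_union]
      right
      rw [hCH, Finset.mem_image]
      refine ⟨l, Finset.mem_Icc.mpr ⟨hl1, hl2⟩, ?_⟩
      simp only [hsl]
      rw [hl]
      field_simp [hy, hy0]
      linarith
    set K : ℤ := ⌊x/a⌋ with hK
    set L : ℤ := ⌊y/b⌋ with hL
    have hxpos : 0 < x := by linarith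
    have hypos : 0 < y := by linarith
    have hK0 : 0 ≤ K := by
      rw [hK, Int.le_floor]
      push_cast
      exact div_nonneg hxpos.le ha.le
    have hL0 : 0 ≤ L := by
      rw [hL, Int.le_floor]
      push_cast
      exact div_nonneg hypos.le hb.le
    have hKi : K ≤ i - 1 := by
      have : K < i := by
        rw [hK, Int.floor_lt]
        rw [div_lt_iff₀ ha]
        exact hxia
      omega
    have hLj : L ≤ j - 1 := by
      have : L < j := by
        rw [hL, Int.floor_lt]
        rw [div_lt_iff₀ hb]
        exact hyjb
      omega
    have hKx : (K:ℝ)*a < x := by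
      have h1 : (K:ℝ) ≤ x/a := Int.floor_le _
      have h2 : (K:ℝ)*a ≤ x := by
        rw [← div_mul_cancel₀ x ha.ne']
        exact mul_le_mul_of_nonneg_right h1 ha.le
      exact lt_of_le_of_ne h2 (hxnm K)
    have hxK : x < ((K:ℝ)+1)*a := by
      have h1 : x/a < (K:ℝ)+1 := Int.lt_floor_add_one _
      rw [← div_mul_cancel₀ x ha.ne']
      exact (mul_lt_mul_iff_left₀ ha).mpr h1
    have hLy : (L:ℝ)*b < y := by
      have h1 : (L:ℝ) ≤ y/b := Int.floor_le _
      have h2 : (L:ℝ)*b ≤ y := by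
        rw [← div_mul_cancel₀ y hb.ne']
        exact mul_le_mul_of_nonneg_right h1 hb.le
      exact lt_of_le_of_ne h2 (hynm L)
    have hyL : y < ((L:ℝ)+1)*b := by
      have h1 : y/b < (L:ℝ)+1 := Int.lt_floor_add_one _
      rw [← div_mul_cancel₀ y hb.ne']
      exact (mul_lt_mul_iff_left₀ hb).mpr h1
    -- filter cards
    have hfV : CV.filter (· < t) = (Finset.Icc 1 K).image tk := by
      ext r
      simp only [Finset.mem_filter, hCV, Finset.mem_image, Finset.mem_Icc]
      constructor
      · rintro ⟨⟨k, ⟨hk1, hk2⟩, rfl⟩, hrt⟩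
        refine ⟨k, ⟨hk1, ?_⟩, rfl⟩
        have hka : (k:ℝ)*a < x := by
          simp only [htk] at hrt
          rw [div_lt_iff₀ hΔx0] at hrt
          simp only [hx]
          linarith
        have : (k:ℝ) ≤ x/a := by
          rw [le_div_iff₀ ha]
          exact hka.le
        rw [hK, Int.le_floor]
        exact this
      · rintro ⟨k, ⟨hk1, hk2⟩, rfl⟩
        have hkr : (k:ℝ) ≤ (K:ℝ) := by exact_mod_cast hk2
        refine ⟨⟨k, ⟨hk1, by omega⟩, rfl⟩, ?_⟩
        simp only [htk]
        rw [div_lt_iff₀ hΔx0]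
        have : (k:ℝ)*a ≤ (K:ℝ)*a := mul_le_mul_of_nonneg_right hkr ha.le
        have h9 : (k:ℝ)*a < x := lt_of_le_of_lt this hKx
        simp only [hx] at h9
        linarith
    have hfH : CH.filter (· < t) = (Finset.Icc 1 L).image sl := by
      ext r
      simp only [Finset.mem_filter, hCH, Finset.mem_image, Finset.mem_Icc]
      constructor
      · rintro ⟨⟨l, ⟨hl1, hl2⟩, rfl⟩, hrt⟩
        refine ⟨l, ⟨hl1, ?_⟩, rfl⟩
        have hlb : (l:ℝ)*b < y := by
          simp only [hsl] at hrt
          rw [div_lt_iff₀ hΔy0] at hrt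
          simp only [hy]
          linarith
        have : (l:ℝ) ≤ y/b := by
          rw [le_div_iff₀ hb]
          exact hlb.le
        rw [hL, Int.le_floor]
        exact this
      · rintro ⟨l, ⟨hl1, hl2⟩, rfl⟩
        have hlr : (l:ℝ) ≤ (L:ℝ) := by exact_mod_cast hl2
        refine ⟨⟨l, ⟨hl1, by omega⟩, rfl⟩, ?_⟩
        simp only [hsl]
        rw [div_lt_iff₀ hΔy0]
        have : (l:ℝ)*b ≤ (L:ℝ)*b := mul_le_mul_of_nonneg_right hlr hb.le
        have h9 : (l:ℝ)*b < y := lt_of_le_of_lt this hLy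
        simp only [hy] at h9
        linarith
    have hcardf : (C.filter (· < t)).card = K.toNat + L.toNat := by
      rw [hC, Finset.filter_union, Finset.card_union_of_disjoint
        (Finset.disjoint_filter_filter hdisj), hfV, hfH,
        Finset.card_image_of_injective _ htkinj, Finset.card_image_of_injective _ hslinj,
        Int.card_Icc, Int.card_Icc]
      omega
    refine ⟨K, L, hK0, hL0, ?_, ?_, hcardf.symm⟩
    · rw [mem_segment_iff]
      refine ⟨t, ht0.le, ht1.le, ?_, ?_⟩
      · simp only [hp, hq, hx]
        ring
      · simp only [hp, hq, hy]
        ring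
    · rw [mem_tileInt_iff]
      exact ⟨⟨hKx, hxK⟩, ⟨hLy, hyL⟩⟩
  set V : Set (ℤ×ℤ) := {kl : ℤ × ℤ | (segment ℝ p q ∩ tileInt a b kl.1 kl.2).Nonempty} with hV
  have hVfin : V.Finite := by
    apply Set.Finite.subset ((Set.finite_Icc (0:ℤ) (i-1)).prod (Set.finite_Icc (0:ℤ) (j-1)))
    rintro ⟨k, l⟩ ⟨z, hzseg, hztile⟩
    rw [mem_segment_iff] at hzseg
    obtain ⟨t, ht0, ht1, h1, h2⟩ := hzseg
    rw [mem_tileInt_iff] at hztile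
    obtain ⟨⟨hx1, hx2⟩, ⟨hy1, hy2⟩⟩ := hztile
    simp only [hp, hq] at h1 h2
    have hz1lo : x0 ≤ z.1 := by
      rw [h1]
      nlinarith
    have hz1hi : z.1 ≤ x0 + Δx := by
      rw [h1]
      nlinarith
    have hz2lo : y0 ≤ z.2 := by
      rw [h2]
      nlinarith
    have hz2hi : z.2 ≤ y0 + Δy := by
      rw [h2]
      nlinarith
    have hxup : x0 + Δx < (i:ℝ)*a := by
      rw [hΔx]
      linarith
    have hyup : y0 + Δy < (j:ℝ)*b := by
      rw [hΔy, hy0]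
      linarith
    constructor
    · -- 0 ≤ k
      have h3 : (0:ℝ) < ((k:ℝ)+1)*a := by
        have : a - ε < z.1 := by linarith
        linarith
      have h4 : (0:ℝ) < (k:ℝ)+1 := by
        by_contra hcon
        push_neg at hcon
        nlinarith
      have : (0:ℤ) < k+1 := by exact_mod_cast h4
      simp only [Set.mem_Icc]
      constructor
      · omega
      · have h5 : (k:ℝ)*a < (i:ℝ)*a := by linarith
        have h6 : (k:ℝ) < (i:ℝ) := (mul_lt_mul_iff_left₀ ha).mp h5
        have : k < i := by exact_mod_cast h6
        omega
    · -- 0 ≤ l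
      have h3 : (0:ℝ) < ((l:ℝ)+1)*b := by
        have h9 : y0 ≤ z.2 := hz2lo
        rw [hy0] at h9
        linarith
      have h4 : (0:ℝ) < (l:ℝ)+1 := by
        by_contra hcon
        push_neg at hcon
        nlinarith
      have : (0:ℤ) < l+1 := by exact_mod_cast h4
      simp only [Set.mem_Icc]
      constructor
      · omega
      · have h5 : (l:ℝ)*b < (j:ℝ)*b := by linarith
        have h6 : (l:ℝ) < (j:ℝ) := (mul_lt_mul_iff_left₀ hb).mp h5
        have : l < j := by exact_mod_cast h6
        omega
  have hmain : ∀ n : ℕ, ∃ kl : ℤ×ℤ, n < (i+j-1).toNat →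
      (kl ∈ V ∧ 0 ≤ kl.1 ∧ 0 ≤ kl.2 ∧ kl.1.toNat + kl.2.toNat = n) := by
    intro n
    by_cases hn : n < (i+j-1).toNat
    · obtain ⟨t, htIoo, htC, hcard⟩ := exists_sep C hCIoo n (by rw [hcardC]; omega)
      obtain ⟨K, L, hK0, hL0, hseg, htile, hsum⟩ := hkey t htIoo htC
      exact ⟨(K, L), fun _ => ⟨⟨_, hseg, htile⟩, hK0, hL0, by omega⟩⟩
    · exact ⟨(0,0), fun h => absurd h hn⟩
  choose g hg using hmain
  have hcount : (i+j-1).toNat ≤ V.ncard := by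
    have h1 : ((Finset.range (i+j-1).toNat).image g).card = (i+j-1).toNat := by
      rw [Finset.card_image_of_injOn, Finset.card_range]
      intro m hm n hn hmn
      rw [Finset.mem_coe, Finset.mem_range] at hm hn
      have ha1 := (hg m hm).2.2.2
      have ha2 := (hg n hn).2.2.2
      rw [hmn] at ha1
      omega
    have h2 : (((Finset.range (i+j-1).toNat).image g : Finset (ℤ×ℤ)) : Set (ℤ×ℤ)) ⊆ V := by
      intro kl hkl
      rw [Finset.coe_image, Set.mem_image] at hkl
      obtain ⟨n, hn, rfl⟩ := hkl
      rw [Finset.mem_coe, Finset.mem_range] at hn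
      exact (hg n hn).1
    calc (i+j-1).toNat = ((Finset.range (i+j-1).toNat).image g).card := h1.symm
      _ = (((Finset.range (i+j-1).toNat).image g : Finset (ℤ×ℤ)) : Set (ℤ×ℤ)).ncard :=
          (Set.ncard_coe_finset _).symm
      _ ≤ V.ncard := Set.ncard_le_ncard h2 hVfin
  refine ⟨p, q, ?_, hcount⟩
  unfold segLen
  simp only [hp, hq]
  congr 1
  rw [hΔx, hΔy]
  ring

lemma lower_mono (a b : ℝ) (ha : 0 < a) (hb : 0 < b) (N : ℕ) (hN : 1 ≤ N) (istar jstar : ℤ)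
    (hopt : ∀ m n : ℤ, 2 ≤ m → 2 ≤ n → (N:ℤ) + 1 ≤ m + n →
      ((istar:ℝ)-2)^2*a^2 + ((jstar:ℝ)-2)^2*b^2 ≤ ((m:ℝ)-2)^2*a^2 + ((n:ℝ)-2)^2*b^2)
    (p q : ℝ×ℝ) (hx : p.1 ≤ q.1) (hy : p.2 ≤ q.2) (hcnt : N ≤ visitCount a b p q) :
    Real.sqrt (((istar : ℝ) - 2) ^ 2 * a ^ 2 + ((jstar : ℝ) - 2) ^ 2 * b ^ 2) ≤ segLen p q := by
  set w : ℤ := ⌈q.1/a⌉ - ⌊p.1/a⌋ with hw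
  set h : ℤ := ⌈q.2/b⌉ - ⌊p.2/b⌋ with hh
  have hcle := count_le_core a b ha hb p q hx hy
  -- nonemptiness gives w, h ≥ 1
  have hne : {kl : ℤ × ℤ | (segment ℝ p q ∩ tileInt a b kl.1 kl.2).Nonempty}.Nonempty := by
    apply Set.nonempty_of_ncard_ne_zero
    have : 1 ≤ visitCount a b p q := le_trans hN hcnt
    unfold visitCount at this
    omega
  obtain ⟨⟨k, l⟩, hkl⟩ := hne
  obtain ⟨⟨hk1, hk2⟩, ⟨hl1, hl2⟩⟩ := visited_bounds a b ha hb p q hx hy k l hkl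
  have hw1 : 1 ≤ w := by omega
  have hh1 : 1 ≤ h := by omega
  have hwh : (N:ℤ) + 1 ≤ w + h := by
    have h2 : N ≤ (w + h - 1).toNat := le_trans hcnt hcle
    omega
  set m : ℤ := max w 2 with hm
  set n : ℤ := max h 2 with hn
  have hopt' := hopt m n (le_max_right _ _) (le_max_right _ _) (by omega)
  -- x-extent bound
  have hΔxw : ((m:ℝ)-2)*a ≤ q.1 - p.1 := by
    rcases le_or_gt w 2 with hc | hc
    · have hm2 : m = 2 := by omega
      rw [hm2]
      norm_num
      linarith
    · have hm2 : m = w := by omega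
      have h1 : (⌈q.1/a⌉ : ℝ) < q.1/a + 1 := Int.ceil_lt_add_one _
      have h2 : (p.1/a : ℝ) - 1 < ⌊p.1/a⌋ := Int.sub_one_lt_floor _
      have h3 : ((w:ℝ)) - 2 < q.1/a - p.1/a := by
        have : (w:ℝ) = (⌈q.1/a⌉ : ℝ) - (⌊p.1/a⌋ : ℝ) := by rw [hw]; push_cast; ring
        rw [this]
        linarith
      have h4 : ((w:ℝ) - 2)*a < (q.1/a - p.1/a)*a := by
        exact mul_lt_mul_of_pos_right h3 ha
      have h5 : (q.1/a - p.1/a)*a = q.1 - p.1 := by field_simp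
      rw [hm2]
      push_cast
      linarith
  have hΔyh : ((n:ℝ)-2)*b ≤ q.2 - p.2 := by
    rcases le_or_gt h 2 with hc | hc
    · have hn2 : n = 2 := by omega
      rw [hn2]
      norm_num
      linarith
    · have hn2 : n = h := by omega
      have h1 : (⌈q.2/b⌉ : ℝ) < q.2/b + 1 := Int.ceil_lt_add_one _
      have h2 : (p.2/b : ℝ) - 1 < ⌊p.2/b⌋ := Int.sub_one_lt_floor _
      have h3 : ((h:ℝ)) - 2 < q.2/b - p.2/b := by
        have : (h:ℝ) = (⌈q.2/b⌉ : ℝ) - (⌊p.2/b⌋ : ℝ) := by rw [hh]; push_cast; ring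
        rw [this]
        linarith
      have h4 : ((h:ℝ) - 2)*b < (q.2/b - p.2/b)*b := by
        exact mul_lt_mul_of_pos_right h3 hb
      have h5 : (q.2/b - p.2/b)*b = q.2 - p.2 := by field_simp
      rw [hn2]
      push_cast
      linarith
  have hm0 : (0:ℝ) ≤ (m:ℝ) - 2 := by
    have : (2:ℝ) ≤ (m:ℝ) := by exact_mod_cast le_max_right w 2
    linarith
  have hn0 : (0:ℝ) ≤ (n:ℝ) - 2 := by
    have : (2:ℝ) ≤ (n:ℝ) := by exact_mod_cast le_max_right h 2
    linarith
  unfold segLen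
  apply Real.sqrt_le_sqrt
  have e1 : (((m:ℝ)-2)*a)^2 ≤ (p.1 - q.1)^2 := by
    rw [show (p.1 - q.1)^2 = (q.1 - p.1)^2 by ring]
    apply pow_le_pow_left₀ (by positivity) hΔxw
  have e2 : (((n:ℝ)-2)*b)^2 ≤ (p.2 - q.2)^2 := by
    rw [show (p.2 - q.2)^2 = (q.2 - p.2)^2 by ring]
    apply pow_le_pow_left₀ (by positivity) hΔyh
  calc ((istar:ℝ)-2)^2*a^2 + ((jstar:ℝ)-2)^2*b^2
      ≤ ((m:ℝ)-2)^2*a^2 + ((n:ℝ)-2)^2*b^2 := hopt'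
    _ = (((m:ℝ)-2)*a)^2 + (((n:ℝ)-2)*b)^2 := by ring
    _ ≤ (p.1 - q.1)^2 + (p.2 - q.2)^2 := add_le_add e1 e2

set_option maxHeartbeats 1000000 in
theorem stmt_9 (a b : ℝ) (ha : 0 < a) (hb : 0 < b) (N : ℕ) (hN : 1 ≤ N)
    (itil jtil : ℝ)
    (hitil : itil = max (((N : ℝ) - 3) * b ^ 2 / (a ^ 2 + b ^ 2)) 0 + 2)
    (hjtil : jtil = max (((N : ℝ) - 3) * a ^ 2 / (a ^ 2 + b ^ 2)) 0 + 2)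
    (istar jstar : ℤ)
    (histar : istar = ⌊itil + 1 / 2⌋) (hjstar : jstar = ⌈jtil - 1 / 2⌉) :
    infLen a b N =
      Real.sqrt (((istar : ℝ) - 2) ^ 2 * a ^ 2 + ((jstar : ℝ) - 2) ^ 2 * b ^ 2) := by
  obtain ⟨hi2, hj2, hsum, hopt⟩ :=
    star_facts a b ha hb N hN itil jtil hitil hjtil istar jstar histar hjstar
  set V0 : ℝ := Real.sqrt (((istar : ℝ) - 2) ^ 2 * a ^ 2 + ((jstar : ℝ) - 2) ^ 2 * b ^ 2) with hV0
  set S : Set ℝ := {ℓ : ℝ | 0 < ℓ ∧ ∃ p q : ℝ × ℝ, segLen p q = ℓ ∧ N ≤ visitCount a b p q} with hS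
  have hir : (2:ℝ) ≤ (istar:ℝ) := by exact_mod_cast hi2
  have hjr : (2:ℝ) ≤ (jstar:ℝ) := by exact_mod_cast hj2
  set A : ℝ := ((istar:ℝ)-2)*a with hA
  set B : ℝ := ((jstar:ℝ)-2)*b with hB
  have hA0 : 0 ≤ A := by rw [hA]; nlinarith
  have hB0 : 0 ≤ B := by rw [hB]; nlinarith
  have hV0AB : V0 = Real.sqrt (A^2 + B^2) := by
    rw [hV0, hA, hB]; congr 1; ring
  have hV00 : 0 ≤ V0 := Real.sqrt_nonneg _
  have hV0sq : V0^2 = A^2 + B^2 := by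
    rw [hV0AB, Real.sq_sqrt (by positivity)]
  have hAle : A ≤ V0 := by
    rw [hV0AB, show A^2 + B^2 = A^2 + B^2 by rfl]
    rw [Real.le_sqrt hA0]
    · nlinarith [sq_nonneg B]
    · positivity
  have hBle : B ≤ V0 := by
    rw [hV0AB]
    rw [Real.le_sqrt hB0]
    · nlinarith [sq_nonneg A]
    · positivity
  -- membership family
  have hmem : ∀ ε : ℝ, 0 < ε → ε < a → ε < b →
      Real.sqrt ((A + ε)^2 + (B + ε)^2) ∈ S := by
    intro ε h1 h2 h3
    obtain ⟨p, q, hlen, hcount⟩ := exists_good_seg a b ha hb istar jstar hi2 hj2 ε h1 h2 h3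
    refine ⟨by positivity, p, q, by rw [hlen, hA, hB], ?_⟩
    calc N ≤ (istar + jstar - 1).toNat := by omega
      _ ≤ visitCount a b p q := hcount
  -- length of constructed segments
  have hlenle : ∀ ε : ℝ, 0 < ε → Real.sqrt ((A + ε)^2 + (B + ε)^2) ≤ V0 + 2*ε := by
    intro ε h1
    rw [show V0 + 2*ε = Real.sqrt ((V0 + 2*ε)^2) by rw [Real.sqrt_sq (by positivity)]]
    apply Real.sqrt_le_sqrt
    nlinarith [hAle, hBle, hA0, hB0, hV00]
  have hεex : 0 < min a b / 2 ∧ min a b / 2 < a ∧ min a b / 2 < b := by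
    refine ⟨by positivity, ?_, ?_⟩
    · calc min a b / 2 < min a b := by
            have : 0 < min a b := lt_min ha hb
            linarith
        _ ≤ a := min_le_left _ _
    · calc min a b / 2 < min a b := by
            have : 0 < min a b := lt_min ha hb
            linarith
        _ ≤ b := min_le_right _ _
  have hSne : S.Nonempty := ⟨_, hmem (min a b / 2) hεex.1 hεex.2.1 hεex.2.2⟩
  -- lower bound
  have hlow : ∀ ℓ ∈ S, V0 ≤ ℓ := by
    rintro ℓ ⟨hpos, p, q, rfl, hcnt⟩
    have main2 : ∀ p q : ℝ×ℝ, p.1 ≤ q.1 → N ≤ visitCount a b p q → V0 ≤ segLen p q := by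
      intro p q hx hcnt
      rcases le_total p.2 q.2 with hy | hy
      · exact lower_mono a b ha hb N hN istar jstar hopt p q hx hy hcnt
      · have hrefl := visitCount_reflect a b p q
        have h2 := lower_mono a b ha hb N hN istar jstar hopt (p.1, -p.2) (q.1, -q.2)
          (by simpa using hx) (by simp; linarith) (by rw [hrefl]; exact hcnt)
        have hlen : segLen (p.1, -p.2) (q.1, -q.2) = segLen p q := by
          unfold segLen
          congr 1
          simp
          ring
        rwa [hlen] at h2
    rcases le_total p.1 q.1 with hx | hx
    · exact main2 p q hx hcnt
    · have h2 := main2 q p hx (by rw [visitCount_symm]; exact hcnt)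
      rwa [segLen_symm] at h2
  have hbdd : BddBelow S := ⟨V0, hlow⟩
  have h1 : V0 ≤ sInf S := le_csInf hSne hlow
  have h2 : sInf S ≤ V0 := by
    by_contra hcon
    push_neg at hcon
    set δ : ℝ := min ((sInf S - V0)/3) (min a b / 2) with hδ
    have hδ0 : 0 < δ := lt_min (by linarith) hεex.1
    have hδa : δ < a := lt_of_le_of_lt (min_le_right _ _) hεex.2.1
    have hδb : δ < b := lt_of_le_of_lt (min_le_right _ _) hεex.2.2
    have hmemδ := hmem δ hδ0 hδa hδb
    have hle := csInf_le hbdd hmemδ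
    have hlenδ := hlenle δ hδ0
    have hδ3 : δ ≤ (sInf S - V0)/3 := min_le_left _ _
    linarith
  show infLen a b N = V0
  rw [infLen]
  exact le_antisymm h2 h1
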